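/- Let G be a k-regular Ramanujan graph with simple trivial eigenvalue on n vertices (k ≥ 3), let ε > 0 be real, and let R be a natural number with R > (1+ε)·log n / log(k−1). Then for every vertex x, the number of vertices y with S_R(x,y) = 0 is at most n^{1−ε}·(1+R)². -/

import Mathlib

open Polynomial Matrix Finset

lemma cheb_T_abs_le (m : ℤ) (x : ℝ) (hx : |x| ≤ 1) :
    |(Chebyshev.T ℝ m).eval x| ≤ 1 := by
  obtain ⟨h1, h2⟩ := abs_le.mp hx
  have hc : Real.cos (Real.arccos x) = x := Real.cos_arccos h1 h2
  rw [← hc, Chebyshev.T_real_cos]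
  exact Real.abs_cos_le_one _

lemma cheb_U_abs_le (m : ℕ) (x : ℝ) (hx : |x| ≤ 1) :
    |(Chebyshev.U ℝ (m : ℤ)).eval x| ≤ m + 1 := by
  induction m with
  | zero => simp [Chebyshev.U_zero]
  | succ n ih =>
      have h := Chebyshev.U_eq_X_mul_U_add_T ℝ (n : ℤ)
      push_cast
      rw [h]
      simp only [eval_add, eval_mul, eval_X]
      calc |x * (Chebyshev.U ℝ (n : ℤ)).eval x + (Chebyshev.T ℝ ((n : ℤ)+1)).eval x|
          ≤ |x * (Chebyshev.U ℝ (n : ℤ)).eval x| + |(Chebyshev.T ℝ ((n : ℤ)+1)).eval x| :=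
            abs_add_le _ _
        _ ≤ 1 * (n + 1) + 1 := by
            refine add_le_add ?_ (cheb_T_abs_le _ _ hx)
            rw [abs_mul]
            exact mul_le_mul hx (ih) (abs_nonneg _) zero_le_one
        _ ≤ (n + 1) + 1 := by ring_nf; norm_num

lemma cheb_U_top (k : ℕ) (hk : 3 ≤ k) :
    ∀ R : ℕ, Real.sqrt ((k:ℝ)-1) ^ R *
      (Chebyshev.U ℝ (R : ℤ)).eval ((k:ℝ) / (2 * Real.sqrt ((k:ℝ)-1)))
      = ∑ i ∈ range (R+1), ((k:ℝ)-1)^i := by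
  set s : ℝ := Real.sqrt ((k:ℝ)-1) with hs
  have hk1 : (1:ℝ) ≤ (k:ℝ) - 1 := by
    have : (3:ℝ) ≤ (k:ℝ) := by exact_mod_cast hk
    linarith
  have hs0 : 0 < s := Real.sqrt_pos.mpr (by linarith)
  have hs2 : s^2 = (k:ℝ) - 1 := Real.sq_sqrt (by linarith)
  have hts : 2 * s * ((k:ℝ) / (2 * s)) = (k:ℝ) := by
    field_simp
  intro R
  induction R using Nat.twoStepInduction with
  | zero => simp [Chebyshev.U_zero]
  | one =>
      have : Chebyshev.U ℝ ((1:ℕ) : ℤ) = 2 * X := by norm_num [Chebyshev.U_one]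
      rw [this]
      simp only [eval_mul, eval_ofNat, eval_X]
      rw [sum_range_succ, sum_range_succ, sum_range_zero]
      rw [pow_one, pow_zero, pow_one]
      have : s * (2 * ((k:ℝ) / (2 * s))) = 2 * s * ((k:ℝ) / (2*s)) := by ring
      rw [this, hts]; ring
  | more n ih ih1 =>
      have h := Chebyshev.U_add_one ℝ ((n : ℤ) + 1)
      have hcast : ((n + 2 : ℕ) : ℤ) = (n : ℤ) + 1 + 1 := by push_cast; ring
      have hcast1 : ((n + 1 : ℕ) : ℤ) = (n : ℤ) + 1 := by push_cast; ring
      rw [hcast, h]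
      simp only [eval_sub, eval_mul, eval_ofNat, eval_X, show (n:ℤ)+1-1 = (n:ℤ) by ring]
      set t : ℝ := (k:ℝ) / (2 * s) with ht
      rw [← hcast1] at *
      have expand : s ^ (n+2) * (2 * t * (Chebyshev.U ℝ ((n+1:ℕ):ℤ)).eval t
          - (Chebyshev.U ℝ ((n:ℕ):ℤ)).eval t)
          = (k:ℝ) * (s^(n+1) * (Chebyshev.U ℝ ((n+1:ℕ):ℤ)).eval t)
            - ((k:ℝ)-1) * (s^n * (Chebyshev.U ℝ ((n:ℕ):ℤ)).eval t) := by
        rw [← hs2, ← hts]; ring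
      rw [expand, ih1, ih]
      rw [sum_range_succ ((fun i => ((k:ℝ)-1)^i)) (n+2), sum_range_succ ((fun i => ((k:ℝ)-1)^i)) (n+1)]
      ring

lemma pow_mulVec_eig {V : Type*} [Fintype V] [DecidableEq V]
    (M : Matrix V V ℝ) (v : V → ℝ) (μ : ℝ) (hv : M *ᵥ v = μ • v) (n : ℕ) :
    (M ^ n) *ᵥ v = (μ ^ n) • v := by
  induction n with
  | zero => simp
  | succ n ih =>
      rw [pow_succ, ← Matrix.mulVec_mulVec, hv, Matrix.mulVec_smul, ih,
        smul_smul, pow_succ]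
      ring_nf

lemma aeval_mulVec_eig {V : Type*} [Fintype V] [DecidableEq V]
    (M : Matrix V V ℝ) (v : V → ℝ) (μ : ℝ) (hv : M *ᵥ v = μ • v) (p : ℝ[X]) :
    (aeval M p) *ᵥ v = (p.eval μ) • v := by
  induction p using Polynomial.induction_on' with
  | add p q hp hq =>
      rw [map_add, Matrix.add_mulVec, hp, hq, eval_add, add_smul]
  | monomial n a =>
      rw [aeval_monomial, eval_monomial, ← Matrix.mulVec_mulVec,
        pow_mulVec_eig M v μ hv n]
      rw [Matrix.mulVec_smul]
      have : (algebraMap ℝ (Matrix V V ℝ)) a *ᵥ v = a • v := by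
        rw [Algebra.algebraMap_eq_smul_one, Matrix.smul_mulVec, Matrix.one_mulVec]
      rw [this, smul_smul, mul_comm]

lemma onb_ortho {V : Type*} [Fintype V] [DecidableEq V]
    (b : OrthonormalBasis V ℝ (EuclideanSpace ℝ V)) (j j' : V) :
    ∑ z, b j z * b j' z = if j = j' then (1:ℝ) else 0 := by
  have h := orthonormal_iff_ite.mp b.orthonormal j j'
  rw [← h, PiLp.inner_apply]
  simp [RCLike.inner_apply]
  exact Finset.sum_congr rfl fun _ _ => mul_comm _ _

lemma onb_expand {V : Type*} [Fintype V]
    (b : OrthonormalBasis V ℝ (EuclideanSpace ℝ V)) (w : V → ℝ) (x : V) :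
    w x = ∑ j, (∑ z, b j z * w z) * b j x := by
  have h := b.sum_repr ((WithLp.equiv 2 (V → ℝ)).symm w)
  have h2 := congrFun (congrArg (fun (u : EuclideanSpace ℝ V) => (u : V → ℝ)) h) x
  simp only [WithLp.equiv_symm_apply, PiLp.toLp_apply] at h2
  rw [← h2]
  simp [Finset.sum_apply, PiLp.smul_apply, OrthonormalBasis.repr_apply_apply,
    PiLp.inner_apply, RCLike.inner_apply, smul_eq_mul]
  simp only [mul_comm (w _)]

/-- Let `G` be a `k`-regular Ramanujan graph (with simple trivial
eigenvalue `k`) on `n` vertices, `k ≥ 3`, let `ε > 0`, and let `R` be a natural number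
with `R > (1+ε)·log n / log(k−1)`, i.e. `R > (1+ε)·log_{k-1} n`. Setting
`S_R := (√(k−1))^R · U_R(A/(2√(k−1)))` where `A` is the adjacency matrix and `U_R` is
the Chebyshev polynomial of the second kind, for every vertex `x` the number of
vertices `y` with `S_R(x,y) = 0` is at most `n^{1−ε}·(1+R)²`. -/
theorem ramanujan_sphere_operator_zero_entries
    {V : Type*} [Fintype V] [DecidableEq V]
    (G : SimpleGraph V) [DecidableRel G.Adj]
    (k : ℕ) (hk : 3 ≤ k) (hreg : G.IsRegularOfDegree k)
    (hA : (G.adjMatrix ℝ).IsHermitian)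
    (j₀ : V) (hj₀ : hA.eigenvalues j₀ = k)
    (hram : ∀ j ≠ j₀, |hA.eigenvalues j| ≤ 2 * Real.sqrt ((k : ℝ) - 1))
    (ε : ℝ) (hε : 0 < ε) (R : ℕ)
    (hR : (R : ℝ) > (1 + ε) * Real.log (Fintype.card V) / Real.log ((k : ℝ) - 1))
    (x : V) :
    ({y : V |
        (Real.sqrt ((k : ℝ) - 1) ^ R •
          aeval ((1 / (2 * Real.sqrt ((k : ℝ) - 1))) • G.adjMatrix ℝ)
            (Chebyshev.U ℝ (R : ℤ))) x y = 0}.ncard : ℝ)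
      ≤ (Fintype.card V : ℝ) ^ ((1 : ℝ) - ε) * (1 + (R : ℝ)) ^ 2 := by
  classical
  set s : ℝ := Real.sqrt ((k:ℝ)-1) with hs
  have hk3 : (3:ℝ) ≤ (k:ℝ) := by exact_mod_cast hk
  have hk1 : (2:ℝ) ≤ (k:ℝ) - 1 := by linarith
  have hs0 : 0 < s := Real.sqrt_pos.mpr (by linarith)
  have hs2 : s^2 = (k:ℝ) - 1 := Real.sq_sqrt (by linarith)
  have hs1 : 1 < s := by nlinarith
  have h2sk : 2 * s < (k:ℝ) := by
    nlinarith [mul_pos (sub_pos.mpr hs1) (sub_pos.mpr hs1)]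
  have hn0 : 0 < Fintype.card V := Fintype.card_pos_iff.mpr ⟨j₀⟩
  set n : ℕ := Fintype.card V with hn
  have hn0' : (0:ℝ) < (n:ℝ) := by exact_mod_cast hn0
  set b := hA.eigenvectorBasis with hb
  set lam : V → ℝ := hA.eigenvalues with hlam
  set p : ℝ[X] := Chebyshev.U ℝ (R:ℤ) with hp
  set c : ℝ := 1 / (2 * s) with hc
  set M : Matrix V V ℝ := c • G.adjMatrix ℝ with hM
  have hc0 : 0 < c := by rw [hc]; positivity
  have heig : ∀ j, M *ᵥ ⇑(b j) = (c * lam j) • ⇑(b j) := by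
    intro j
    rw [hM, Matrix.smul_mulVec, hA.mulVec_eigenvectorBasis, smul_smul]
  set w : V → ℝ := fun j => s ^ R * p.eval (c * lam j) with hw
  -- entry formula
  have hentry : ∀ y, (s ^ R • aeval M p) x y = ∑ j, w j * (b j x * b j y) := by
    intro y
    have hsingle : ∀ (j : V) (z0 : V), (∑ z, b j z * (Pi.single z0 (1:ℝ) : V → ℝ) z) = b j z0 := by
      intro j z0
      simp [Pi.single_apply, mul_ite]
    have h1 : (aeval M p) x y = ∑ z, (aeval M p) x z * (Pi.single y (1:ℝ) : V → ℝ) z := by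
      simp [Pi.single_apply, mul_ite]
    have h2 : ∀ z, (Pi.single y (1:ℝ) : V → ℝ) z = ∑ j, b j y * b j z := by
      intro z
      rw [onb_expand b ((Pi.single y (1:ℝ) : V → ℝ)) z]
      exact Finset.sum_congr rfl fun j _ => by rw [hsingle j y]
    rw [Matrix.smul_apply, smul_eq_mul, h1]
    calc s^R * ∑ z, (aeval M p) x z * (Pi.single y (1:ℝ) : V → ℝ) z
        = s^R * ∑ z, (aeval M p) x z * ∑ j, b j y * b j z := by
          congr 1; exact Finset.sum_congr rfl fun z _ => by rw [h2 z]
      _ = s^R * ∑ j, b j y * ∑ z, (aeval M p) x z * b j z := by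
          congr 1
          simp only [Finset.mul_sum]
          rw [Finset.sum_comm]
          refine Finset.sum_congr rfl fun j _ => ?_
          exact Finset.sum_congr rfl fun z _ => by ring
      _ = ∑ j, w j * (b j x * b j y) := by
          rw [Finset.mul_sum]
          refine Finset.sum_congr rfl fun j _ => ?_
          have h3 : ∑ z, (aeval M p) x z * b j z = ((aeval M p) *ᵥ ⇑(b j)) x := by
            simp [Matrix.mulVec, dotProduct]
          rw [h3, aeval_mulVec_eig M (⇑(b j)) (c * lam j) (heig j) p]
          simp only [Pi.smul_apply, smul_eq_mul, hw]
          ring_nf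
  -- Parseval at x
  have hpar : ∑ j, (b j x)^2 = 1 := by
    have h := onb_expand b ((Pi.single x (1:ℝ) : V → ℝ)) x
    simp only [Pi.single_eq_same] at h
    have h2 : ∀ j : V, (∑ z, b j z * (Pi.single x (1:ℝ) : V → ℝ) z) * b j x = (b j x)^2 := by
      intro j
      have hx1 : (∑ z, b j z * (Pi.single x (1:ℝ) : V → ℝ) z) = b j x := by
        simp [Pi.single_apply, mul_ite]
      rw [hx1]; ring
    calc ∑ j, (b j x)^2 = ∑ j, (∑ z, b j z * (Pi.single x (1:ℝ) : V → ℝ) z) * b j x :=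
          Finset.sum_congr rfl fun j _ => (h2 j).symm
      _ = 1 := h.symm
  -- constant eigenvector
  set cc : V → ℝ := fun j => ∑ z, b j z with hcc
  have hcolsum : ∀ u : V, ∑ z, G.adjMatrix ℝ u z = (k:ℝ) := by
    intro u
    have h := SimpleGraph.adjMatrix_mulVec_const_apply_of_regular (α := ℝ) (a := (1:ℝ)) hreg (v := u)
    simp only [Matrix.mulVec, dotProduct, Function.const_apply, mul_one] at h
    simpa using h
  have hsymm : ∀ u z : V, G.adjMatrix ℝ u z = G.adjMatrix ℝ z u := by
    intro u z
    simp [SimpleGraph.adjMatrix_apply, G.adj_comm u z]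
  have hceig : ∀ j, lam j * cc j = (k:ℝ) * cc j := by
    intro j
    have hv := hA.mulVec_eigenvectorBasis j
    have h1 : ∑ u, (G.adjMatrix ℝ *ᵥ ⇑(b j)) u = (k:ℝ) * cc j := by
      simp only [Matrix.mulVec, dotProduct]
      rw [Finset.sum_comm]
      calc ∑ z, ∑ u, G.adjMatrix ℝ u z * b j z
          = ∑ z, (∑ u, G.adjMatrix ℝ z u) * b j z := by
            refine Finset.sum_congr rfl fun z _ => ?_
            rw [Finset.sum_mul]
            exact Finset.sum_congr rfl fun u _ => by rw [hsymm u z]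
        _ = ∑ z, (k:ℝ) * b j z := by
            exact Finset.sum_congr rfl fun z _ => by rw [hcolsum z]
        _ = (k:ℝ) * cc j := by rw [← Finset.mul_sum, hcc]
    have h2 : ∑ u, (G.adjMatrix ℝ *ᵥ ⇑(b j)) u = lam j * cc j := by
      rw [hv]
      simp only [Pi.smul_apply, smul_eq_mul]
      rw [← Finset.mul_sum]
    rw [← h2, h1]
  have hlamne : ∀ j, j ≠ j₀ → lam j ≠ (k:ℝ) := by
    intro j hj hcon
    have h := hram j hj
    rw [hcon] at h
    have : (k:ℝ) ≤ 2 * s := le_trans (le_abs_self _) h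
    linarith
  have hcc0 : ∀ j, j ≠ j₀ → cc j = 0 := by
    intro j hj
    by_contra hne
    exact hlamne j hj (mul_right_cancel₀ hne (hceig j))
  have hone : ∀ z, (1:ℝ) = cc j₀ * b j₀ z := by
    intro z
    have h := onb_expand b (fun _ => (1:ℝ)) z
    simp only [mul_one] at h
    rw [Finset.sum_eq_single j₀] at h
    · exact h
    · intro j _ hj
      rw [show (∑ z', b j z') = cc j from rfl, hcc0 j hj, zero_mul]
    · intro hmem; exact absurd (Finset.mem_univ j₀) hmem
  have hcj0 : cc j₀ ≠ 0 := by
    intro h0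
    have h := hone x
    rw [h0, zero_mul] at h
    exact one_ne_zero h
  have hfj0 : ∀ z, b j₀ z = 1 / cc j₀ := by
    intro z
    rw [eq_div_iff hcj0]
    linarith [hone z]
  have hccsq : cc j₀ ^ 2 = (n:ℝ) := by
    have hnorm : ∑ z, b j₀ z * b j₀ z = 1 := by
      have h := onb_ortho b j₀ j₀
      simpa using h
    have h1 : ∑ z, b j₀ z * b j₀ z = (n:ℝ) * (1/cc j₀ * (1/cc j₀)) := by
      rw [Finset.sum_congr rfl fun z _ => by rw [hfj0 z]]
      rw [Finset.sum_const, nsmul_eq_mul, Finset.card_univ, ← hn]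
    rw [hnorm] at h1
    field_simp at h1
    rw [pow_two]
    linarith
  have hkey : ∀ y z : V, b j₀ y * b j₀ z = 1 / (n:ℝ) := by
    intro y z
    rw [hfj0 y, hfj0 z, div_mul_div_comm, one_mul, ← pow_two, hccsq]
  -- value at the trivial eigenvalue
  have hclam : c * lam j₀ = (k:ℝ) / (2*s) := by
    rw [hj₀, hc, one_div, inv_mul_eq_div]
  have hwj0 : w j₀ = ∑ i ∈ range (R+1), ((k:ℝ)-1)^i := by
    rw [hw]
    simp only []
    rw [hclam, hp]
    exact cheb_U_top k hk R
  set P : ℝ := ((k:ℝ)-1)^R with hP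
  have hP0 : 0 < P := by rw [hP]; positivity
  have hWge : P ≤ w j₀ := by
    rw [hwj0, hP]
    refine Finset.single_le_sum (f := fun i => ((k:ℝ)-1)^i) (fun i _ => by positivity) ?_
    simp
  have hW0 : 0 < w j₀ := lt_of_lt_of_le hP0 hWge
  -- bound on nontrivial weights
  have hwbound : ∀ j, j ≠ j₀ → |w j| ≤ ((R:ℝ)+1) * s^R := by
    intro j hj
    have harg : |c * lam j| ≤ 1 := by
      rw [abs_mul, abs_of_pos hc0, hc]
      have := hram j hj
      rw [div_mul_eq_mul_div, one_mul, div_le_one (by positivity)]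
      linarith
    have hU := cheb_U_abs_le R (c * lam j) harg
    rw [hw]
    simp only []
    rw [abs_mul, abs_of_pos (pow_pos hs0 R)]
    calc s^R * |p.eval (c * lam j)| ≤ s^R * ((R:ℝ)+1) := by
          refine mul_le_mul_of_nonneg_left ?_ (le_of_lt (pow_pos hs0 R))
          rw [hp]; exact hU
      _ = ((R:ℝ)+1) * s^R := by ring
  -- error term
  set E : V → ℝ := fun y => ∑ j ∈ Finset.univ.erase j₀, w j * (b j x * b j y) with hE
  have hsplit : ∀ y, (s ^ R • aeval M p) x y = w j₀ * (1/(n:ℝ)) + E y := by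
    intro y
    rw [hentry y, ← Finset.add_sum_erase Finset.univ _ (Finset.mem_univ j₀), hkey x y, hE]
  have hEsq : ∑ y, (E y)^2 = ∑ j ∈ Finset.univ.erase j₀, (w j)^2 * (b j x)^2 := by
    calc ∑ y, (E y)^2
        = ∑ y, ∑ j ∈ Finset.univ.erase j₀, ∑ j' ∈ Finset.univ.erase j₀,
            ((w j * b j x) * (w j' * b j' x)) * (b j y * b j' y) := by
          refine Finset.sum_congr rfl fun y _ => ?_
          rw [hE]
          simp only []
          rw [pow_two, Finset.sum_mul_sum]
          exact Finset.sum_congr rfl fun j _ =>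
            Finset.sum_congr rfl fun j' _ => by ring
      _ = ∑ j ∈ Finset.univ.erase j₀, ∑ j' ∈ Finset.univ.erase j₀,
            ((w j * b j x) * (w j' * b j' x)) * ∑ y, b j y * b j' y := by
          rw [Finset.sum_comm]
          refine Finset.sum_congr rfl fun j _ => ?_
          rw [Finset.sum_comm]
          refine Finset.sum_congr rfl fun j' _ => ?_
          rw [Finset.mul_sum]
      _ = ∑ j ∈ Finset.univ.erase j₀, (w j)^2 * (b j x)^2 := by
          refine Finset.sum_congr rfl fun j hj => ?_
          rw [Finset.sum_eq_single j]
          · rw [onb_ortho b j j, if_pos rfl]; ring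
          · intro j' _ hne
            rw [onb_ortho b j j', if_neg (fun hcon => hne hcon.symm), mul_zero]
          · intro hmem; exact absurd hj hmem
  have hEbound : ∑ y, (E y)^2 ≤ (((R:ℝ)+1) * s^R)^2 := by
    rw [hEsq]
    calc ∑ j ∈ Finset.univ.erase j₀, (w j)^2 * (b j x)^2
        ≤ ∑ j ∈ Finset.univ.erase j₀, (((R:ℝ)+1) * s^R)^2 * (b j x)^2 := by
          refine Finset.sum_le_sum fun j hj => ?_
          have hj' : j ≠ j₀ := (Finset.mem_erase.mp hj).1
          have h2 : (w j)^2 ≤ (((R:ℝ)+1)*s^R)^2 := by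
            rw [← sq_abs (w j)]
            exact pow_le_pow_left₀ (abs_nonneg _) (hwbound j hj') 2
          exact mul_le_mul_of_nonneg_right h2 (sq_nonneg _)
      _ = (((R:ℝ)+1)*s^R)^2 * ∑ j ∈ Finset.univ.erase j₀, (b j x)^2 := by
          rw [Finset.mul_sum]
      _ ≤ (((R:ℝ)+1)*s^R)^2 * 1 := by
          refine mul_le_mul_of_nonneg_left ?_ (sq_nonneg _)
          rw [← hpar]
          exact Finset.sum_le_sum_of_subset_of_nonneg (Finset.erase_subset _ _)
            (fun j _ _ => sq_nonneg _)
      _ = (((R:ℝ)+1)*s^R)^2 := mul_one _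
  -- the zero set
  have hZfin : ({y : V | (s ^ R • aeval M p) x y = 0}).Finite := Set.toFinite _
  rw [Set.ncard_eq_toFinset_card _ hZfin]
  set Zf : Finset V := hZfin.toFinset with hZf
  have hZmem : ∀ y ∈ Zf, (s ^ R • aeval M p) x y = 0 := by
    intro y hy
    exact hZfin.mem_toFinset.mp hy
  have hkey2 : (Zf.card : ℝ) * (w j₀ / (n:ℝ))^2 ≤ (((R:ℝ)+1)*s^R)^2 := by
    calc (Zf.card : ℝ) * (w j₀/(n:ℝ))^2 = ∑ _y ∈ Zf, (w j₀/(n:ℝ))^2 := by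
          rw [Finset.sum_const, nsmul_eq_mul]
      _ = ∑ y ∈ Zf, (E y)^2 := by
          refine Finset.sum_congr rfl fun y hy => ?_
          have h0 := hZmem y hy
          have hsp := hsplit y
          rw [h0] at hsp
          rw [mul_one_div] at hsp
          have hEy : E y = -(w j₀ / (n:ℝ)) := by linarith
          rw [hEy]; ring
      _ ≤ ∑ y, (E y)^2 :=
          Finset.sum_le_sum_of_subset_of_nonneg (Finset.subset_univ _)
            (fun _ _ _ => sq_nonneg _)
      _ ≤ _ := hEbound
  -- log estimate
  have hlogk : 0 < Real.log ((k:ℝ)-1) := Real.log_pos (by linarith)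
  have hRlog : (1+ε) * Real.log (n:ℝ) ≤ (R:ℝ) * Real.log ((k:ℝ)-1) := by
    rw [gt_iff_lt, div_lt_iff₀ hlogk] at hR
    linarith
  have hnP : (n:ℝ) ^ ((1:ℝ)+ε) ≤ P := by
    rw [hP, ← Real.rpow_natCast ((k:ℝ)-1) R,
      Real.rpow_def_of_pos hn0', Real.rpow_def_of_pos (by linarith : (0:ℝ) < (k:ℝ)-1)]
    exact Real.exp_le_exp.mpr (by rw [mul_comm (Real.log ((k:ℝ)-1)) (R:ℝ),
      mul_comm (Real.log (n:ℝ))]; exact hRlog)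
  -- final arithmetic
  have hsP : (s^R)^2 = P := by
    rw [← pow_mul, mul_comm R 2, pow_mul, hs2, hP]
  have hn2 : (0:ℝ) < (n:ℝ)^2 := by positivity
  have hfinal : (Zf.card:ℝ) * (w j₀)^2 ≤ ((R:ℝ)+1)^2 * P * (n:ℝ)^2 := by
    have h := hkey2
    rw [div_pow] at h
    calc (Zf.card:ℝ) * (w j₀)^2
        = ((Zf.card:ℝ) * ((w j₀)^2/(n:ℝ)^2)) * (n:ℝ)^2 := by
          rw [mul_assoc, div_mul_cancel₀ _ (ne_of_gt hn2)]
      _ ≤ (((R:ℝ)+1)*s^R)^2 * (n:ℝ)^2 :=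
          mul_le_mul_of_nonneg_right h (le_of_lt hn2)
      _ = ((R:ℝ)+1)^2 * P * (n:ℝ)^2 := by rw [mul_pow, hsP]
  have hnsplit : (n:ℝ)^2 = (n:ℝ)^((1:ℝ)-ε) * (n:ℝ)^((1:ℝ)+ε) := by
    rw [← Real.rpow_add hn0', show ((1:ℝ)-ε) + (1+ε) = 2 by ring]
    rw [show ((2:ℝ) = ((2:ℕ):ℝ)) by norm_num, Real.rpow_natCast]
  have hnse : (0:ℝ) ≤ (n:ℝ)^((1:ℝ)-ε) := Real.rpow_nonneg (le_of_lt hn0') _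
  have hchain : ((R:ℝ)+1)^2 * P * (n:ℝ)^2
      ≤ ((n:ℝ)^((1:ℝ)-ε) * (1+(R:ℝ))^2) * (w j₀)^2 := by
    have h1 : ((R:ℝ)+1)^2 * P * (n:ℝ)^2
        ≤ ((R:ℝ)+1)^2 * P * ((n:ℝ)^((1:ℝ)-ε) * P) := by
      refine mul_le_mul_of_nonneg_left ?_ (by positivity)
      rw [hnsplit]
      exact mul_le_mul_of_nonneg_left hnP hnse
    have h2 : P^2 ≤ (w j₀)^2 := pow_le_pow_left₀ (le_of_lt hP0) hWge 2
    calc ((R:ℝ)+1)^2 * P * (n:ℝ)^2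
        ≤ ((R:ℝ)+1)^2 * P * ((n:ℝ)^((1:ℝ)-ε) * P) := h1
      _ = ((n:ℝ)^((1:ℝ)-ε) * (1+(R:ℝ))^2) * P^2 := by ring
      _ ≤ ((n:ℝ)^((1:ℝ)-ε) * (1+(R:ℝ))^2) * (w j₀)^2 :=
          mul_le_mul_of_nonneg_left h2 (by positivity)
  have hW2 : 0 < (w j₀)^2 := pow_pos hW0 2
  have hfin2 : (Zf.card:ℝ) * (w j₀)^2
      ≤ ((n:ℝ)^((1:ℝ)-ε) * (1+(R:ℝ))^2) * (w j₀)^2 := le_trans hfinal hchain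
  exact le_of_mul_le_mul_right hfin2 hW2
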